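/- Let H_1, …, H_m be distinct linear hyperplanes in ℝ^d with ∩_{i=1}^m H_i = {0}. The closed chambers of the arrangement (closures of connected components of ℝ^d \ ∪ H_i) are polyhedral cones, and the union of the dual cones C° over all closed chambers C equals ℝ^d. -/

import Mathlib

open scoped RealInnerProductSpace Pointwise Classical
open Set

noncomputable section

abbrev E (d : ℕ) : Type := EuclideanSpace ℝ (Fin d)

variable {d : ℕ}

/-- Positive hull: all finite nonnegative combinations of elements of `A`. -/
def posHull (A : Set (E d)) : Set (E d) :=
  {x | ∃ (n : ℕ) (c : Fin n → ℝ) (v : Fin n → E d),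
    (∀ i, 0 ≤ c i) ∧ (∀ i, v i ∈ A) ∧ x = ∑ i, c i • v i}

/-- Dual (polar) cone. -/
def polarCone (C : Set (E d)) : Set (E d) := {z | ∀ y ∈ C, ⟪z, y⟫ ≤ 0}

/-- A polyhedral cone: finite intersection of linear closed half-spaces. -/
def IsPolyCone (C : Set (E d)) : Prop :=
  ∃ (m : ℕ) (y : Fin m → E d), C = {z | ∀ i, ⟪z, y i⟫ ≤ 0}

/-- A polyhedral set: finite intersection of closed half-spaces. -/
def IsPolyhedron (P : Set (E d)) : Prop :=
  ∃ (m : ℕ) (y : Fin m → E d) (c : Fin m → ℝ), P = {z | ∀ i, ⟪z, y i⟫ ≤ c i}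

/-- Faces of `P`: `P` itself, or intersections with supporting hyperplanes. -/
def IsFaceOf (P F : Set (E d)) : Prop :=
  F = P ∨ ∃ (y : E d) (c : ℝ), (∀ z ∈ P, ⟪y, z⟫ ≤ c) ∧ F = {z | z ∈ P ∧ ⟪y, z⟫ = c}

/-- Dimension of a set: dimension of its affine hull. -/
def sdim (F : Set (E d)) : ℕ := Module.finrank ℝ (affineSpan ℝ F).direction

/-- The `k`-dimensional (nonempty) faces of `P`. -/
def facesOfDim (P : Set (E d)) (k : ℕ) : Set (Set (E d)) :=
  {F | IsFaceOf P F ∧ F.Nonempty ∧ sdim F = k}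

/-- Tangent cone of `P` at a point `f₀`. -/
def tangentConeOf (P : Set (E d)) (f₀ : E d) : Set (E d) :=
  {u | ∃ δ : ℝ, 0 < δ ∧ f₀ + δ • u ∈ P}

/-- Normal cone of `P` at its face `F`: polar of the tangent cone at any
relative interior point of `F`. -/
def normalCone (P F : Set (E d)) : Set (E d) :=
  {z | ∀ f₀ ∈ intrinsicInterior ℝ F, ∀ u ∈ tangentConeOf P f₀, ⟪z, u⟫ ≤ 0}

/-- `y` is a nearest point of `P` to `x`. -/
def IsNearestPt (P : Set (E d)) (x y : E d) : Prop :=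
  y ∈ P ∧ ∀ z ∈ P, dist x y ≤ dist x z

/-- `dim(x,P) = k`: the metric projection of `x` onto `P` lies in the relative
interior of a `k`-dimensional face of `P`. -/
def projDimEq (P : Set (E d)) (x : E d) (k : ℕ) : Prop :=
  ∃ y F, IsNearestPt P x y ∧ IsFaceOf P F ∧ y ∈ intrinsicInterior ℝ F ∧ sdim F = k

def IsHyperplane (H : Set (E d)) : Prop :=
  ∃ (y : E d) (c : ℝ), y ≠ 0 ∧ H = {z | ⟪y, z⟫ = c}

def IsLinearHyperplane (H : Set (E d)) : Prop :=
  ∃ y : E d, y ≠ 0 ∧ H = {z | ⟪y, z⟫ = 0}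

/-- Closed chambers of the complement of the set `S`. -/
def IsChamberOfUnion (S P : Set (E d)) : Prop :=
  ∃ x : E d, x ∉ S ∧ P = closure (connectedComponentIn Sᶜ x)

/-- Closed chambers of the hyperplane arrangement `A`. -/
def IsChamber (A : Finset (Set (E d))) (P : Set (E d)) : Prop :=
  IsChamberOfUnion (⋃ H ∈ A, H) P

/-- Intersection of a finite subcollection of hyperplanes (`⊤` for `∅`). -/
def interSet (B : Finset (Set (E d))) : Set (E d) := ⋂ H ∈ B, H

/-- The unsigned coefficient `a_k` of the characteristic polynomial:
`χ_A(t) = Σ_k (-1)^(d-k) a_k t^k` via Whitney's formula. -/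
def charCoeff (A : Finset (Set (E d))) (k : ℕ) : ℤ :=
  (-1 : ℤ) ^ (d - k) *
    ∑ B ∈ A.powerset,
      if (interSet B).Nonempty ∧ sdim (interSet B) = k then (-1 : ℤ) ^ B.card else 0

lemma exists_pos_lt' {ι : Type*} [Fintype ι] (r : ι → ℝ) (hr : ∀ i, 0 < r i) :
    ∃ δ : ℝ, 0 < δ ∧ ∀ i, δ < r i := by
  cases isEmpty_or_nonempty ι with
  | inl h => exact ⟨1, one_pos, fun i => (h.false i).elim⟩
  | inr h =>
    obtain ⟨i₀, -, h₀⟩ := Finset.exists_mem_eq_inf' (Finset.univ_nonempty (α := ι)) r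
    have hpos : 0 < Finset.univ.inf' Finset.univ_nonempty r := h₀ ▸ hr i₀
    exact ⟨_, half_pos hpos, fun i =>
      lt_of_lt_of_le (half_lt_self hpos) (Finset.inf'_le _ (Finset.mem_univ i))⟩

lemma exists_inner_ne_zero' (s : Finset (E d)) (hs : ∀ v ∈ s, v ≠ 0) :
    ∃ z : E d, ∀ v ∈ s, ⟪v, z⟫ ≠ 0 := by
  classical
  induction s using Finset.induction_on with
  | empty => exact ⟨0, fun v hv => absurd hv (Finset.notMem_empty v)⟩
  | @insert v s hvs ih =>
    obtain ⟨z, hz⟩ := ih (fun u hu => hs u (Finset.mem_insert_of_mem hu))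
    have hv0 : v ≠ 0 := hs v (Finset.mem_insert_self v s)
    obtain ⟨t, ht⟩ := Infinite.exists_notMem_finset
      ((insert v s).image (fun u : E d => -⟪u, z⟫ / ⟪u, v⟫))
    refine ⟨z + t • v, fun u hu hcon => ?_⟩
    rw [inner_add_right, real_inner_smul_right] at hcon
    by_cases huv : ⟪u, v⟫ = 0
    · rw [huv, mul_zero, add_zero] at hcon
      rcases Finset.mem_insert.mp hu with rfl | hu'
      · exact hv0 ((inner_self_eq_zero (𝕜 := ℝ)).mp huv)
      · exact hz u hu' hcon
    · apply ht
      rw [Finset.mem_image]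
      refine ⟨u, hu, ?_⟩
      rw [div_eq_iff huv]
      linarith

lemma compl_union_eq (A : Finset (Set (E d))) (n : ↥A → E d)
    (hn : ∀ H : ↥A, (H : Set (E d)) = {z : E d | ⟪n H, z⟫ = 0}) :
    (⋃ H ∈ A, H)ᶜ = {z : E d | ∀ H : ↥A, ⟪n H, z⟫ ≠ 0} := by
  ext z
  simp only [mem_compl_iff, mem_iUnion, mem_setOf_eq, not_exists]
  constructor
  · intro h H hz
    exact h H.1 H.2 (by rw [hn H]; exact hz)
  · intro h H hH hz
    exact h ⟨H, hH⟩ ((Set.ext_iff.mp (hn ⟨H, hH⟩) z).mp hz)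

lemma chamber_eq (A : Finset (Set (E d))) (n : ↥A → E d)
    (hn : ∀ H : ↥A, (H : Set (E d)) = {z : E d | ⟪n H, z⟫ = 0})
    (x : E d) (hx : ∀ H : ↥A, ⟪n H, x⟫ ≠ 0) :
    closure (connectedComponentIn (⋃ H ∈ A, H)ᶜ x) =
      {z : E d | ∀ H : ↥A, 0 ≤ (if 0 < ⟪n H, x⟫ then (1:ℝ) else -1) * ⟪n H, z⟫} := by
  set ε : ↥A → ℝ := fun H => if 0 < ⟪n H, x⟫ then (1:ℝ) else -1 with hε
  have hεne : ∀ H, ε H ≠ 0 := by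
    intro H; rw [hε]; dsimp only; split <;> norm_num
  have hεx : ∀ H, 0 < ε H * ⟪n H, x⟫ := by
    intro H
    rcases (hx H).lt_or_gt with h | h
    · rw [hε]; dsimp only; rw [if_neg (not_lt.mpr h.le)]; nlinarith
    · rw [hε]; dsimp only; rw [if_pos h, one_mul]; exact h
  have hcont : ∀ H : ↥A, Continuous fun z : E d => ε H * ⟪n H, z⟫ := fun H =>
    continuous_const.mul ((continuous_const (y := n H)).inner continuous_id)
  have hlin : ∀ H : ↥A, IsLinearMap ℝ fun z : E d => ε H * ⟪n H, z⟫ := by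
    intro H
    constructor
    · intro a b; rw [inner_add_right]; ring
    · intro c a; rw [real_inner_smul_right]; simp; ring
  set O : Set (E d) := {z | ∀ H : ↥A, 0 < ε H * ⟪n H, z⟫} with hO
  have hOeq : O = ⋂ H : ↥A, {z : E d | 0 < ε H * ⟪n H, z⟫} := by
    rw [hO]; ext z; simp [mem_iInter]
  have hOopen : IsOpen O := by
    rw [hOeq]; exact isOpen_iInter_of_finite fun H => isOpen_lt continuous_const (hcont H)
  have hOconv : Convex ℝ O := by
    rw [hOeq]
    exact convex_iInter fun H => (convex_Ioi (0:ℝ)).is_linear_preimage (hlin H)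
  have hxO : x ∈ O := fun H => hεx H
  have hOsub : O ⊆ (⋃ H ∈ A, H)ᶜ := by
    rw [compl_union_eq A n hn]
    intro z hz H h0
    have := hz H
    rw [h0, mul_zero] at this
    exact lt_irrefl 0 this
  have hcomp : connectedComponentIn (⋃ H ∈ A, H)ᶜ x = O := by
    apply Subset.antisymm
    · intro z hz H
      have hzS : z ∈ (⋃ H ∈ A, H)ᶜ := connectedComponentIn_subset _ _ hz
      rw [compl_union_eq A n hn] at hzS
      have hne : ε H * ⟪n H, z⟫ ≠ 0 := mul_ne_zero (hεne H) (hzS H)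
      have hsub2 : connectedComponentIn (⋃ H ∈ A, H)ᶜ x ⊆
          {w : E d | 0 < ε H * ⟪n H, w⟫} := by
        apply IsPreconnected.subset_left_of_subset_union
          (isOpen_lt continuous_const (hcont H)) (isOpen_lt (hcont H) continuous_const)
        · exact Set.disjoint_left.mpr fun w (h1 : 0 < ε H * ⟪n H, w⟫) (h2 : ε H * ⟪n H, w⟫ < 0) => lt_asymm h1 h2
        · intro w hw
          have hwS : w ∈ (⋃ H ∈ A, H)ᶜ := connectedComponentIn_subset _ _ hw
          rw [compl_union_eq A n hn] at hwS
          have : ε H * ⟪n H, w⟫ ≠ 0 := mul_ne_zero (hεne H) (hwS H)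
          rcases this.lt_or_gt with h | h
          · exact Or.inr h
          · exact Or.inl h
        · refine ⟨x, ?_, hεx H⟩
          exact mem_connectedComponentIn (by rw [compl_union_eq A n hn]; exact hx)
        · exact isPreconnected_connectedComponentIn
      exact hsub2 hz
    · exact hOconv.isPreconnected.subset_connectedComponentIn hxO hOsub
  rw [hcomp]
  apply Subset.antisymm
  · apply closure_minimal
    · intro z hz H
      exact le_of_lt (hz H)
    · have : {z : E d | ∀ H : ↥A, 0 ≤ ε H * ⟪n H, z⟫} =
          ⋂ H : ↥A, {z : E d | 0 ≤ ε H * ⟪n H, z⟫} := by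
        ext z; simp [mem_iInter]
      rw [this]
      exact isClosed_iInter fun H => isClosed_le continuous_const (hcont H)
  · intro z hz
    have htend : Filter.Tendsto (fun t : ℝ => z + t • (x - z)) (nhdsWithin 0 (Set.Ioi 0)) (nhds z) := by
      have hc : Continuous fun t : ℝ => z + t • (x - z) :=
        continuous_const.add (continuous_id.smul continuous_const)
      have := hc.tendsto 0
      rw [show z + (0:ℝ) • (x - z) = z by simp] at this
      exact this.mono_left nhdsWithin_le_nhds
    apply mem_closure_of_tendsto htend
    filter_upwards [Ioo_mem_nhdsGT_of_mem (Set.left_mem_Ico.mpr one_pos)] with t ht H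
    have h1 : ε H * ⟪n H, z + t • (x - z)⟫
        = (1 - t) * (ε H * ⟪n H, z⟫) + t * (ε H * ⟪n H, x⟫) := by
      rw [inner_add_right, real_inner_smul_right, inner_sub_right]; ring
    rw [h1]
    nlinarith [hz H, hεx H, ht.1, ht.2]

/-- for a full-rank linear arrangement, the closed chambers are
polyhedral cones and their dual cones cover `ℝ^d`. -/
theorem stmt2 {d : ℕ} (A : Finset (Set (E d)))
    (hA : ∀ H ∈ A, IsLinearHyperplane H)
    (hrank : (⋂ H ∈ A, H) = ({0} : Set (E d))) :
    (∀ P : Set (E d), IsChamber A P → IsPolyCone P) ∧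
    {x : E d | ∃ P, IsChamber A P ∧ x ∈ polarCone P} = Set.univ := by
  
  classical
  have hn' : ∀ H : ↥A, ∃ y : E d, y ≠ 0 ∧ (H : Set (E d)) = {z | ⟪y, z⟫ = 0} :=
    fun H => hA H.1 H.2
  choose n hn0 hn using hn'
  constructor
  · rintro P ⟨x, hxS, rfl⟩
    have hx : ∀ H : ↥A, ⟪n H, x⟫ ≠ 0 := by
      have hmem : x ∈ (⋃ H ∈ A, H)ᶜ := hxS
      rw [compl_union_eq A n hn] at hmem
      exact hmem
    rw [chamber_eq A n hn x hx]
    refine ⟨A.card, fun i =>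
      -(if 0 < ⟪n (A.equivFin.symm i), x⟫ then (1:ℝ) else -1) • n (A.equivFin.symm i), ?_⟩
    ext z
    simp only [mem_setOf_eq]
    constructor
    · intro h i
      have hh := h (A.equivFin.symm i)
      rw [real_inner_comm z (n (A.equivFin.symm i))] at hh
      rw [real_inner_smul_right]
      nlinarith [hh]
    · intro h H
      have hh := h (A.equivFin H)
      simp only [Equiv.symm_apply_apply] at hh
      rw [real_inner_smul_right] at hh
      rw [real_inner_comm z (n H)]
      nlinarith [hh]
  · ext x
    simp only [mem_setOf_eq, mem_univ, iff_true]
    obtain ⟨g, hg⟩ := exists_inner_ne_zero' (Finset.univ.image n)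
      (fun v hv => by obtain ⟨H, -, rfl⟩ := Finset.mem_image.mp hv; exact hn0 H)
    have hgH : ∀ H : ↥A, ⟪n H, g⟫ ≠ 0 :=
      fun H => hg (n H) (Finset.mem_image_of_mem n (Finset.mem_univ H))
    set Q : Set (E d) := {z : E d | ∀ H : ↥A, |⟪n H, z⟫| ≤ 1} with hQdef
    have hQclosed : IsClosed Q := by
      have : Q = ⋂ H : ↥A, {z : E d | |⟪n H, z⟫| ≤ 1} := by
        rw [hQdef]; ext z; simp [mem_iInter]
      rw [this]
      exact isClosed_iInter fun H => isClosed_le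
        ((continuous_const.inner continuous_id).abs) continuous_const
    let L : E d →ₗ[ℝ] (↥A → ℝ) :=
      { toFun := fun z H => ⟪n H, z⟫
        map_add' := by
          intro a b; funext H
          show ⟪n H, a + b⟫ = ⟪n H, a⟫ + ⟪n H, b⟫
          exact inner_add_right _ _ _
        map_smul' := by
          intro c a; funext H
          show ⟪n H, c • a⟫ = c * ⟪n H, a⟫
          exact real_inner_smul_right _ _ _ }
    have hker : LinearMap.ker L = ⊥ := by
      rw [LinearMap.ker_eq_bot']
      intro z hz
      have hz' : ∀ H : ↥A, ⟪n H, z⟫ = 0 := fun H => congrFun hz H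
      have hmem : z ∈ ⋂ H ∈ A, H := by
        refine mem_iInter₂.mpr fun H hH => ?_
        exact (Set.ext_iff.mp (hn ⟨H, hH⟩) z).mpr (hz' ⟨H, hH⟩)
      rw [hrank] at hmem
      exact hmem
    obtain ⟨K, hK0, hKanti⟩ := L.exists_antilipschitzWith hker
    have hQbdd : Bornology.IsBounded Q := by
      apply (Metric.isBounded_closedBall (x := (0 : E d)) (r := K)).subset
      intro z hzQ
      have h1 : ‖L z‖ ≤ 1 := by
        rw [pi_norm_le_iff_of_nonneg zero_le_one]
        intro H
        rw [Real.norm_eq_abs]; exact hzQ H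
      have h2 : dist z 0 ≤ K * dist (L z) (L 0) := hKanti.le_mul_dist z 0
      rw [map_zero, dist_zero_right, dist_zero_right] at h2
      rw [Metric.mem_closedBall, dist_zero_right]
      calc ‖z‖ ≤ K * ‖L z‖ := h2
        _ ≤ K * 1 := by gcongr
        _ = K := mul_one _
    have hQcpt : IsCompact Q := Metric.isCompact_of_isClosed_isBounded hQclosed hQbdd
    have h0Q : (0 : E d) ∈ Q := fun H => by simp
    have hcx : Continuous fun z : E d => ⟪x, z⟫ := continuous_const.inner continuous_id
    obtain ⟨z₀, hz₀Q, hz₀min⟩ := hQcpt.exists_isMinOn ⟨0, h0Q⟩ hcx.continuousOn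
    set r : ↥A → ℝ :=
      fun H => if ⟪n H, z₀⟫ = 0 then 1 else |⟪n H, z₀⟫| / |⟪n H, g⟫| with hrdef
    have hrpos : ∀ H, 0 < r H := by
      intro H; rw [hrdef]; dsimp only; split_ifs with h
      · exact one_pos
      · exact div_pos (abs_pos.mpr h) (abs_pos.mpr (hgH H))
    obtain ⟨δ, hδ0, hδ⟩ := exists_pos_lt' r hrpos
    set w := z₀ + δ • g with hwdef
    have hwinner : ∀ H : ↥A, ⟪n H, w⟫ = ⟪n H, z₀⟫ + δ * ⟪n H, g⟫ := fun H => by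
      rw [hwdef, inner_add_right, real_inner_smul_right]
    have hkey : ∀ H : ↥A, ⟪n H, z₀⟫ ≠ 0 → |δ * ⟪n H, g⟫| < |⟪n H, z₀⟫| := by
      intro H h
      have h1 : δ < |⟪n H, z₀⟫| / |⟪n H, g⟫| := by
        have h2 := hδ H
        rw [hrdef] at h2; dsimp only at h2; rwa [if_neg h] at h2
      rw [abs_mul, abs_of_pos hδ0]
      rwa [lt_div_iff₀ (abs_pos.mpr (hgH H))] at h1
    have hwpos : ∀ H : ↥A, 0 < ⟪n H, z₀⟫ → 0 < ⟪n H, w⟫ := by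
      intro H h
      have habs := hkey H h.ne'
      rw [abs_of_pos h] at habs
      rw [hwinner H]
      have h2 := neg_abs_le (δ * ⟪n H, g⟫)
      linarith
    have hwneg : ∀ H : ↥A, ⟪n H, z₀⟫ < 0 → ⟪n H, w⟫ < 0 := by
      intro H h
      have habs := hkey H h.ne
      rw [abs_of_neg h] at habs
      rw [hwinner H]
      have h2 := le_abs_self (δ * ⟪n H, g⟫)
      linarith
    have hw : ∀ H : ↥A, ⟪n H, w⟫ ≠ 0 := by
      intro H
      rcases eq_or_ne ⟪n H, z₀⟫ 0 with h | h
      · rw [hwinner H, h, zero_add]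
        exact mul_ne_zero hδ0.ne' (hgH H)
      · rcases h.lt_or_gt with h' | h'
        · exact (hwneg H h').ne
        · exact (hwpos H h').ne'
    refine ⟨closure (connectedComponentIn (⋃ H ∈ A, H)ᶜ w), ⟨w, ?_, rfl⟩, ?_⟩
    · have : w ∈ (⋃ H ∈ A, H)ᶜ := by rw [compl_union_eq A n hn]; exact hw
      exact this
    · rw [chamber_eq A n hn w hw]
      simp only [polarCone, mem_setOf_eq]
      intro y hy
      have hb : ∀ H : ↥A, (0 < ⟪n H, w⟫ → 0 ≤ ⟪n H, y⟫) ∧ (⟪n H, w⟫ < 0 → ⟪n H, y⟫ ≤ 0) := by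
        intro H
        have hh := hy H
        constructor
        · intro hpos; rw [if_pos hpos, one_mul] at hh; exact hh
        · intro hneg; rw [if_neg (not_lt.mpr hneg.le)] at hh; linarith
      set u : ↥A → ℝ := fun H =>
        if h : ⟪n H, y⟫ = 0 then 1
        else if 0 < ⟪n H, y⟫ then (⟪n H, z₀⟫ + 1) / ⟪n H, y⟫
        else (1 - ⟪n H, z₀⟫) / (-⟪n H, y⟫) with hudef
      have haQ : ∀ H : ↥A, |⟪n H, z₀⟫| ≤ 1 := hz₀Q
      have hupos : ∀ H, 0 < u H := by
        intro H
        have ha := abs_le.mp (haQ H)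
        rw [hudef]; dsimp only
        split_ifs with h1 h2
        · exact one_pos
        · refine div_pos ?_ h2
          rcases lt_or_eq_of_le ha.1 with h3 | h3
          · linarith
          · exfalso
            have h4 : ⟪n H, z₀⟫ < 0 := by rw [← h3]; norm_num
            have := (hb H).2 (hwneg H h4)
            linarith
        · have hylt : ⟪n H, y⟫ < 0 := lt_of_le_of_ne (not_lt.mp h2) h1
          refine div_pos ?_ (by linarith)
          rcases lt_or_eq_of_le ha.2 with h3 | h3
          · linarith
          · exfalso
            have h4 : 0 < ⟪n H, z₀⟫ := by rw [h3]; norm_num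
            have := (hb H).1 (hwpos H h4)
            linarith
      obtain ⟨t, ht0, htu⟩ := exists_pos_lt' u hupos
      have hmemQ : z₀ - t • y ∈ Q := by
        intro H
        rw [inner_sub_right, real_inner_smul_right]
        have ha := abs_le.mp (haQ H)
        have htH := htu H
        rw [hudef] at htH; dsimp only at htH
        rcases eq_or_ne ⟪n H, y⟫ 0 with hb0 | hb0
        · rw [hb0, mul_zero, sub_zero]; exact haQ H
        rw [dif_neg hb0] at htH
        rcases (lt_or_gt_of_ne hb0) with hblt | hbgt
        · rw [if_neg (not_lt.mpr hblt.le)] at htH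
          rw [lt_div_iff₀ (by linarith : (0:ℝ) < -⟪n H, y⟫)] at htH
          rw [abs_le]
          constructor
          · nlinarith
          · nlinarith
        · rw [if_pos hbgt] at htH
          rw [lt_div_iff₀ hbgt] at htH
          rw [abs_le]
          constructor
          · nlinarith
          · nlinarith
      have hmin : ⟪x, z₀⟫ ≤ ⟪x, z₀ - t • y⟫ := hz₀min hmemQ
      rw [inner_sub_right, real_inner_smul_right] at hmin
      nlinarith
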